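/- Let $S^0$ be the semigroup $\mathscr{S}_n\ltimes(\mathbb{N}\times\mathbb{N})^n$ with adjoined zero, equipped with a Hausdorff locally compact non-discrete topology making multiplication separately continuous. Then for every open neighbourhood $U$ of $0$, every $\sigma\in\mathscr{S}_n$, and every $\mathbf{a}\in\mathbb{N}^n$, the set $L_\sigma^{\mathbf{a}}\setminus U$ is finite, where $L_\sigma^{\mathbf{a}}=\{(\sigma,[\mathbf{a},\mathbf{x}]) : \mathbf{x}\in\mathbb{N}^n\}$. -/

import Mathlib

/-- Elements of the semigroup `S = 𝒮ₙ ⋉ (ℕ × ℕ)ⁿ`: a permutation of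
`{1,…,n}` together with a pair of tuples of positive integers. -/
abbrev Gel (n : ℕ) := Equiv.Perm (Fin n) × (Fin n → ℕ+) × (Fin n → ℕ+)

/-- The right action of a permutation on tuples: `((x)σ)_i = x_{σ⁻¹(i)}`. -/
def ract {n : ℕ} (σ : Equiv.Perm (Fin n)) (x : Fin n → ℕ+) : Fin n → ℕ+ :=
  fun i => x (σ.symm i)

/-- The semidirect product operation
`(α,[x,y])·(β,[u,v]) = (α∘β, [(x)β + max{(y)β,u} - (y)β, v + max{(y)β,u} - u])`,
where `α∘β` is the composition of the permutations acting on the right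
(first `α`, then `β`) and max and subtraction are coordinatewise. -/
def gmul {n : ℕ} (a b : Gel n) : Gel n :=
  (b.1 * a.1,
   fun i => ract b.1 a.2.1 i + max (ract b.1 a.2.2 i) (b.2.1 i) - ract b.1 a.2.2 i,
   fun i => b.2.2 i + max (ract b.1 a.2.2 i) (b.2.1 i) - b.2.1 i)

/-- The semigroup with adjoined zero: `none` is the zero. -/
def gmul0 {n : ℕ} : Option (Gel n) → Option (Gel n) → Option (Gel n)
  | some a, some b => some (gmul a b)
  | _, _ => none

namespace GelAux

lemma pnadd1 (a b : ℕ+) : a + b - a = b := by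
  apply PNat.coe_injective
  rw [PNat.sub_coe]
  simp [PNat.lt_add_right]

lemma pnadd2 (a b : ℕ+) : a + b - b = a := by
  rw [add_comm]; exact pnadd1 b a

@[simp] lemma ract_one {n : ℕ} (x : Fin n → ℕ+) : ract (1 : Equiv.Perm (Fin n)) x = x := rfl

def eW {n : ℕ} (w : Fin n → ℕ+) : Gel n := (1, w, w)

lemma gmul0_some {n : ℕ} (a b : Gel n) : gmul0 (some a) (some b) = some (gmul a b) := rfl

lemma gmul0_none_left {n : ℕ} (x : Option (Gel n)) : gmul0 none x = none := rfl

lemma gmul0_none_right {n : ℕ} (x : Option (Gel n)) : gmul0 x none = none := by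
  cases x <;> rfl

lemma mul_eW {n : ℕ} (s : Gel n) (w : Fin n → ℕ+) (h : ∀ i, w i ≤ s.2.2 i) :
    gmul s (eW w) = s := by
  obtain ⟨β, u, v⟩ := s
  unfold gmul eW
  refine Prod.ext (one_mul β) (Prod.ext ?_ ?_) <;> funext i <;> dsimp only <;>
    simp only [ract_one]
  · rw [max_eq_left (h i), pnadd2]
  · rw [max_eq_left (h i), pnadd1]

lemma mul_eW_ne {n : ℕ} (s : Gel n) (w : Fin n → ℕ+) (i : Fin n) (h : s.2.2 i < w i) :
    gmul s (eW w) ≠ s := by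
  intro he
  have h2 := congrArg (fun t : Gel n => t.2.2 i) he
  simp only [gmul, eW, ract_one] at h2
  rw [max_eq_right h.le, pnadd1] at h2
  exact absurd h2 h.ne'

lemma eW_mul {n : ℕ} (s : Gel n) (w : Fin n → ℕ+) (h : ∀ i, ract s.1 w i ≤ s.2.1 i) :
    gmul (eW w) s = s := by
  obtain ⟨β, u, v⟩ := s
  unfold gmul eW
  refine Prod.ext (mul_one β) (Prod.ext ?_ ?_) <;> funext i <;> dsimp only
  · rw [max_eq_right (h i), pnadd1]
  · rw [max_eq_right (h i), pnadd2]

lemma eW_mul_ne {n : ℕ} (s : Gel n) (w : Fin n → ℕ+) (i : Fin n)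
    (h : s.2.1 i < ract s.1 w i) : gmul (eW w) s ≠ s := by
  intro he
  have h2 := congrArg (fun t : Gel n => t.2.1 i) he
  simp only [gmul, eW] at h2
  rw [max_eq_left h.le, pnadd1] at h2
  exact absurd h2 (by exact h.ne')

end GelAux

namespace GelAux

lemma finite_bdd {n : ℕ} (C : ℕ) :
    {f : Fin n → ℕ+ | ∀ i, (f i : ℕ) ≤ C}.Finite := by
  have he : {f : Fin n → ℕ+ | ∀ i, (f i : ℕ) ≤ C} =
      (fun (f : Fin n → ℕ+) (i : Fin n) => (f i : ℕ)) ⁻¹' (Set.univ.pi fun _ => Set.Iic C) := by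
    ext f; simp [Set.mem_pi, Set.mem_preimage, Pi.le_def]
  rw [he]
  refine Set.Finite.preimage ?_ (Set.Finite.pi fun _ => Set.finite_Iic C)
  intro f _ g _ h
  funext i
  exact PNat.coe_injective (congrFun h i)

lemma finite_bddG {n : ℕ} (C : ℕ) :
    {s : Gel n | (∀ i, (s.2.1 i : ℕ) ≤ C) ∧ (∀ i, (s.2.2 i : ℕ) ≤ C)}.Finite := by
  refine Set.Finite.subset (Set.Finite.prod Set.finite_univ
    ((finite_bdd C).prod (finite_bdd C))) ?_
  rintro ⟨β, u, v⟩ ⟨h1, h2⟩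
  exact ⟨Set.mem_univ _, h1, h2⟩

section Topo

variable {n : ℕ} [TopologicalSpace (Option (Gel n))] [T2Space (Option (Gel n))]

/-- Every point of `S` is isolated. -/
lemma isolated
    (hsep : ∀ a : Option (Gel n),
      Continuous (fun x => gmul0 a x) ∧ Continuous (fun x => gmul0 x a))
    (g : Gel n) : IsOpen ({some g} : Set (Option (Gel n))) := by
  classical
  obtain ⟨γ, c, d⟩ := g
  -- v-bounding open sets
  have TOOL1 : ∀ i : Fin n, ∃ O : Set (Option (Gel n)), IsOpen O ∧ some (γ, c, d) ∈ O ∧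
      ∀ s : Gel n, some s ∈ O → s.2.2 i ≤ d i := by
    intro i
    set w : Fin n → ℕ+ := fun j => if j = i then d i + 1 else 1 with hw
    have hne : some (gmul (γ, c, d) (eW w)) ≠ some (γ, c, d) := by
      intro he
      exact mul_eW_ne (γ, c, d) w i (by simp [hw, PNat.lt_add_right]) (Option.some_injective _ he)
    obtain ⟨Q, P, hQ, hP, hgQ, hgP, hdis⟩ := t2_separation hne
    refine ⟨P ∩ ((fun x => gmul0 x (some (eW w))) ⁻¹' Q), ?_, ?_, ?_⟩
    · exact hP.inter (((hsep (some (eW w))).2).isOpen_preimage Q hQ)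
    · exact ⟨hgP, hgQ⟩
    · rintro s ⟨hsP, hsQ⟩
      simp only [Set.mem_preimage, gmul0_some] at hsQ
      by_contra hlt
      push_neg at hlt
      -- if not, then for all j, w j ≤ v j fails only at i
      have heq : gmul s (eW w) = s := by
        apply mul_eW
        intro j
        by_cases hj : j = i
        · subst hj; simp [hw]; exact hlt
        · simp [hw, hj]
      rw [heq] at hsQ
      exact Set.disjoint_left.mp hdis hsQ hsP
  -- u-bounding open sets
  have TOOL2 : ∀ k : Fin n, ∃ O : Set (Option (Gel n)), IsOpen O ∧ some (γ, c, d) ∈ O ∧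
      ∀ s : Gel n, some s ∈ O → s.2.1 (s.1 k) ≤ c (γ k) := by
    intro k
    set w : Fin n → ℕ+ := fun j => if j = k then c (γ k) + 1 else 1 with hw
    have hne : some (gmul (eW w) (γ, c, d)) ≠ some (γ, c, d) := by
      intro he
      refine eW_mul_ne (γ, c, d) w (γ k) ?_ (Option.some_injective _ he)
      show c (γ k) < ract γ w (γ k)
      simp [ract, hw, PNat.lt_add_right]
    obtain ⟨Q, P, hQ, hP, hgQ, hgP, hdis⟩ := t2_separation hne
    refine ⟨P ∩ ((fun x => gmul0 (some (eW w)) x) ⁻¹' Q), ?_, ?_, ?_⟩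
    · exact hP.inter (((hsep (some (eW w))).1).isOpen_preimage Q hQ)
    · exact ⟨hgP, hgQ⟩
    · rintro s ⟨hsP, hsQ⟩
      simp only [Set.mem_preimage, gmul0_some] at hsQ
      by_contra hlt
      push_neg at hlt
      have heq : gmul (eW w) s = s := by
        apply eW_mul
        intro j
        show w (s.1.symm j) ≤ s.2.1 j
        by_cases hj : s.1.symm j = k
        · have hjk : j = s.1 k := by rw [← hj, Equiv.apply_symm_apply]
          subst hjk; simp [hw, hj]; exact hlt
        · simp [hw, hj]
      rw [heq] at hsQ
      exact Set.disjoint_left.mp hdis hsQ hsP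
  choose Ov hOv1 hOv2 hOv3 using TOOL1
  choose Ou hOu1 hOu2 hOu3 using TOOL2
  set C : ℕ := Finset.univ.sup (fun k : Fin n => max (c k : ℕ) (d k : ℕ)) with hC
  set O : Set (Option (Gel n)) :=
    {none}ᶜ ∩ ((⋂ i, Ov i) ∩ ⋂ k, Ou k) with hO
  have hOopen : IsOpen O := by
    refine IsOpen.inter ?_ (IsOpen.inter ?_ ?_)
    · exact isOpen_compl_singleton
    · exact isOpen_iInter_of_finite hOv1
    · exact isOpen_iInter_of_finite hOu1
  have hgO : some (γ, c, d) ∈ O := by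
    refine ⟨by simp, Set.mem_iInter.2 hOv2, Set.mem_iInter.2 hOu2⟩
  have hOfin : O.Finite := by
    have hsub : O ⊆ (fun s : Gel n => some s) ''
        {s : Gel n | (∀ i, (s.2.1 i : ℕ) ≤ C) ∧ (∀ i, (s.2.2 i : ℕ) ≤ C)} := by
      rintro x ⟨hx0, hxv, hxu⟩
      match x with
      | none => exact absurd rfl hx0
      | some s =>
        refine ⟨s, ⟨?_, ?_⟩, rfl⟩
        · intro m
          have := hOu3 (s.1.symm m) s (Set.mem_iInter.1 hxu (s.1.symm m))
          rw [Equiv.apply_symm_apply] at this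
          calc (s.2.1 m : ℕ) ≤ (c (γ (s.1.symm m)) : ℕ) := this
            _ ≤ max (c (γ (s.1.symm m)) : ℕ) (d (γ (s.1.symm m)) : ℕ) := le_max_left _ _
            _ ≤ C := Finset.le_sup (f := fun k : Fin n => max (c k : ℕ) (d k : ℕ)) (Finset.mem_univ _)
        · intro i
          have := hOv3 i s (Set.mem_iInter.1 hxv i)
          calc (s.2.2 i : ℕ) ≤ (d i : ℕ) := this
            _ ≤ max (c i : ℕ) (d i : ℕ) := le_max_right _ _
            _ ≤ C := Finset.le_sup (f := fun k : Fin n => max (c k : ℕ) (d k : ℕ)) (Finset.mem_univ _)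
    exact Set.Finite.subset (Set.Finite.image _ (finite_bddG C)) hsub
  have : ({some (γ, c, d)} : Set (Option (Gel n))) = O \ (O \ {some (γ, c, d)}) := by
    ext x
    constructor
    · rintro rfl; exact ⟨hgO, fun h => h.2 rfl⟩
    · rintro ⟨hxO, hx⟩
      by_contra hne
      exact hx ⟨hxO, hne⟩
  rw [this]
  exact hOopen.sdiff (Set.Finite.isClosed (hOfin.subset (Set.diff_subset)))

lemma compact_diff_finite
    (hsep : ∀ a : Option (Gel n),
      Continuous (fun x => gmul0 a x) ∧ Continuous (fun x => gmul0 x a))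
    {C W : Set (Option (Gel n))} (hC : IsCompact C) (hW : IsOpen W) (h0 : none ∈ W) :
    (C \ W).Finite := by
  have hcov : C \ W ⊆ ⋃ g : Gel n, {some g} := by
    rintro x ⟨hxC, hxW⟩
    match x with
    | none => exact absurd h0 hxW
    | some g => exact Set.mem_iUnion.2 ⟨g, rfl⟩
  obtain ⟨t, ht⟩ := (hC.diff hW).elim_finite_subcover (fun g : Gel n => {some g})
    (fun g => isolated hsep g) hcov
  refine Set.Finite.subset ?_ ht
  exact t.finite_toSet.biUnion (fun g _ => Set.finite_singleton _)

lemma zero_not_isolated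
    (hsep : ∀ a : Option (Gel n),
      Continuous (fun x => gmul0 a x) ∧ Continuous (fun x => gmul0 x a))
    (hnd : ¬ DiscreteTopology (Option (Gel n))) :
    ¬ IsOpen ({none} : Set (Option (Gel n))) := by
  intro h
  refine hnd (discreteTopology_iff_isOpen_singleton.2 ?_)
  intro a
  match a with
  | none => exact h
  | some g => exact isolated hsep g

lemma nhd_zero_infinite
    (hsep : ∀ a : Option (Gel n),
      Continuous (fun x => gmul0 a x) ∧ Continuous (fun x => gmul0 x a))
    (hnd : ¬ DiscreteTopology (Option (Gel n)))
    {W : Set (Option (Gel n))} (hW : IsOpen W) (h0 : none ∈ W) : W.Infinite := by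
  intro hfin
  apply zero_not_isolated hsep hnd
  have : ({none} : Set (Option (Gel n))) = W \ (W \ {none}) := by
    ext x
    constructor
    · rintro rfl; exact ⟨h0, fun h => h.2 rfl⟩
    · rintro ⟨hxW, hx⟩
      by_contra hne
      exact hx ⟨hxW, hne⟩
  rw [this]
  exact hW.sdiff (Set.Finite.isClosed (hfin.subset Set.diff_subset))

end Topo

lemma pnat_sub_eq (a b c : ℕ+) (h : (a : ℕ) = (c : ℕ) + (b : ℕ)) : a - b = c := by
  have hc : 0 < (c : ℕ) := c.pos
  have hb : b < a := by
    rw [← PNat.coe_lt_coe]; omega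
  apply PNat.coe_injective
  rw [PNat.sub_coe, if_pos hb]
  omega

lemma pn_two_le (m : ℕ+) : (2 : ℕ+) ≤ m + 1 := add_le_add_left m.one_le 1

/-- the `u`-decrement map at target coordinate `i₀`, for the `β`-component. -/
def gd {n : ℕ} (β : Equiv.Perm (Fin n)) (i₀ : Fin n) : Gel n :=
  (1, fun _ => 1, fun j => if j = β.symm i₀ then 2 else 1)

lemma ract_gd {n : ℕ} (β : Equiv.Perm (Fin n)) (i₀ i : Fin n) :
    ract β (gd β i₀).2.2 i = if i = i₀ then 2 else 1 := by
  show (if β.symm i = β.symm i₀ then (2:ℕ+) else 1) = _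
  simp [β.symm.injective.eq_iff]

lemma delta_succ {n : ℕ} (β : Equiv.Perm (Fin n)) (i₀ : Fin n) (u v : Fin n → ℕ+)
    (m : ℕ+) (h : u i₀ = m + 1) :
    gmul (gd β i₀) (β, u, v) = (β, Function.update u i₀ m, v) := by
  classical
  unfold gmul
  refine Prod.ext (mul_one β) (Prod.ext ?_ ?_) <;> funext i <;> dsimp only <;>
      rw [show ract β (gd β i₀).2.2 i = if i = i₀ then 2 else 1 from ract_gd β i₀ i]
  · show (1 : ℕ+) + max _ (u i) - _ = _
    rcases eq_or_ne i i₀ with rfl | hne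
    · rw [if_pos rfl, Function.update_self, h, max_eq_right (pn_two_le m)]
      exact pnat_sub_eq _ _ _ (by push_cast; ring)
    · rw [if_neg hne, Function.update_of_ne hne, max_eq_right (u i).one_le]
      exact pnat_sub_eq _ _ _ (by push_cast; ring)
  · show v i + max _ (u i) - u i = v i
    rcases eq_or_ne i i₀ with rfl | hne
    · rw [if_pos rfl, h, max_eq_right (pn_two_le m)]
      exact pnat_sub_eq _ _ _ (by push_cast; ring)
    · rw [if_neg hne, max_eq_right (u i).one_le]
      exact pnat_sub_eq _ _ _ (by push_cast; ring)

lemma delta_base {n : ℕ} (β : Equiv.Perm (Fin n)) (i₀ : Fin n) (u v : Fin n → ℕ+)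
    (h : u i₀ = 1) :
    gmul (gd β i₀) (β, u, v) = (β, u, Function.update v i₀ (v i₀ + 1)) := by
  classical
  unfold gmul
  refine Prod.ext (mul_one β) (Prod.ext ?_ ?_) <;> funext i <;> dsimp only <;>
      rw [show ract β (gd β i₀).2.2 i = if i = i₀ then 2 else 1 from ract_gd β i₀ i]
  · show (1 : ℕ+) + max _ (u i) - _ = u i
    rcases eq_or_ne i i₀ with rfl | hne
    · rw [if_pos rfl, h, max_eq_left (by decide)]; decide
    · rw [if_neg hne, max_eq_right (u i).one_le]
      exact pnat_sub_eq _ _ _ (by push_cast; ring)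
  · show v i + max _ (u i) - u i = _
    rcases eq_or_ne i i₀ with rfl | hne
    · rw [if_pos rfl, Function.update_self, h, max_eq_left (by decide)]
      exact pnat_sub_eq _ _ _ (by push_cast; ring)
    · rw [if_neg hne, Function.update_of_ne hne, max_eq_right (u i).one_le]
      exact pnat_sub_eq _ _ _ (by push_cast; ring)

/-- the `v`-increment-by-`t` map at coordinate `i₀` (right multiplication). -/
def hr {n : ℕ} (i₀ : Fin n) (t : ℕ+) : Gel n :=
  (1, fun _ => 1, fun j => if j = i₀ then t + 1 else 1)

lemma rmap {n : ℕ} (i₀ : Fin n) (t : ℕ+) (s : Gel n) :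
    gmul s (hr i₀ t) = (s.1, s.2.1, Function.update s.2.2 i₀ (s.2.2 i₀ + t)) := by
  classical
  obtain ⟨β, u, v⟩ := s
  unfold gmul hr
  refine Prod.ext (one_mul β) (Prod.ext ?_ ?_) <;> funext i <;>
    simp only [ract_one]
  · rw [max_eq_left (v i).one_le]
    exact pnat_sub_eq _ _ _ (by push_cast; ring)
  · rcases eq_or_ne i i₀ with rfl | hne
    · rw [if_pos rfl, Function.update_self, max_eq_left (v i).one_le]
      exact pnat_sub_eq _ _ _ (by push_cast; ring)
    · rw [if_neg hne, Function.update_of_ne hne, max_eq_left (v i).one_le]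
      exact pnat_sub_eq _ _ _ (by push_cast; ring)

/-- the map sending the `(β₀,u₀)`-family onto the line `L_σ^a`. -/
def gline {n : ℕ} (β₀ : Equiv.Perm (Fin n)) (u₀ : Fin n → ℕ+) (σ : Equiv.Perm (Fin n))
    (a : Fin n → ℕ+) : Gel n :=
  (β₀⁻¹ * σ, fun i => a (β₀ i), fun i => u₀ (β₀ i))

lemma gline_mul {n : ℕ} (β₀ : Equiv.Perm (Fin n)) (u₀ : Fin n → ℕ+)
    (σ : Equiv.Perm (Fin n)) (a : Fin n → ℕ+) (v : Fin n → ℕ+) :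
    gmul (gline β₀ u₀ σ a) (β₀, u₀, v) = (σ, a, v) := by
  unfold gmul gline
  refine Prod.ext (mul_inv_cancel_left β₀ σ) (Prod.ext ?_ ?_) <;> funext i <;> dsimp only <;>
    rw [show ract β₀ (fun i => u₀ (β₀ i)) i = u₀ i from congrArg u₀ (β₀.apply_symm_apply i),
      max_self]
  · rw [show ract β₀ (fun i => a (β₀ i)) i = a i from congrArg a (β₀.apply_symm_apply i)]
    exact pnat_sub_eq _ _ _ (by push_cast; ring)
  · exact pnat_sub_eq _ _ _ (by push_cast; ring)

/-- the final down map. -/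
def hD {n : ℕ} (y : Fin n → ℕ+) : Gel n := (1, fun i => y i + 1, fun _ => 1)

lemma hD_mul {n : ℕ} (σ : Equiv.Perm (Fin n)) (a x y : Fin n → ℕ+) :
    gmul (σ, a, fun i => x i + y i) (hD y) = (σ, a, x) := by
  unfold gmul hD
  refine Prod.ext (one_mul σ) (Prod.ext ?_ ?_) <;> funext i <;>
    simp only [ract_one] <;>
    rw [max_eq_left (by rw [add_comm (y i) 1]; exact add_le_add_left (x i).one_le (y i))]
  · exact pnat_sub_eq _ _ _ (by push_cast; ring)
  · exact pnat_sub_eq _ _ _ (by push_cast; ring)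

lemma pigeon {α : Type*} {ι : Type*} [Finite ι] {T : Set α} (hT : T.Infinite)
    (f : ι → Set α) (hc : T ⊆ ⋃ i, f i) : ∃ i, (T ∩ f i).Infinite := by
  by_contra hfin
  push_neg at hfin
  refine hT ?_
  have he : T = ⋃ i, T ∩ f i := by
    ext x
    constructor
    · intro hx
      obtain ⟨i, hi⟩ := Set.mem_iUnion.1 (hc hx)
      exact Set.mem_iUnion.2 ⟨i, hx, hi⟩
    · rintro hx
      obtain ⟨i, hi, _⟩ := Set.mem_iUnion.1 hx
      exact hi
  rw [he]
  exact Set.finite_iUnion hfin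

lemma pigeon_perm {n : ℕ} {T : Set (Gel n)} (hT : T.Infinite) :
    ∃ β, (T ∩ {s | s.1 = β}).Infinite :=
  pigeon hT (fun β : Equiv.Perm (Fin n) => {s | s.1 = β})
    (fun s _ => Set.mem_iUnion.2 ⟨s.1, rfl⟩)

lemma core {n : ℕ} (i₀ : Fin n) (SA : Set (Gel n)) (hinf : SA.Infinite)
    (hlam : ∀ g : Gel n, {s : Gel n | s ∈ SA ∧ gmul g s ∉ SA}.Finite)
    (hrho : ∀ h : Gel n, {s : Gel n | s ∈ SA ∧ gmul s h ∉ SA}.Finite) :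
    ∃ β₀ u₀, {v : Fin n → ℕ+ | (β₀, u₀, v) ∈ SA}.Infinite := by
  classical
  by_cases hufib : ∃ u₀, {s | s ∈ SA ∧ s.2.1 = u₀}.Infinite
  · obtain ⟨u₀, hu⟩ := hufib
    obtain ⟨β₀, hβ⟩ := pigeon_perm hu
    refine ⟨β₀, u₀, ?_⟩
    have himg := hβ.image (f := fun s : Gel n => s.2.2) ?inj
    case inj =>
      rintro s ⟨⟨_, hsu⟩, hsb⟩ s' ⟨⟨_, hsu'⟩, hsb'⟩ hv
      exact Prod.ext (hsb.trans hsb'.symm) (Prod.ext (hsu.trans hsu'.symm) hv)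
    refine himg.mono ?_
    rintro v ⟨s, ⟨⟨hs, hsu⟩, hsb⟩, rfl⟩
    have hse : (β₀, u₀, s.2.2) = s := by
      refine Prod.ext hsb.symm (Prod.ext hsu.symm rfl)
    show (β₀, u₀, s.2.2) ∈ SA
    rwa [hse]
  · push_neg at hufib
    replace hufib : ∀ u₀ : Fin n → ℕ+, {s | s ∈ SA ∧ s.2.1 = u₀}.Finite :=
      fun u₀ => hufib u₀
    exfalso
    obtain ⟨β, hG⟩ := pigeon_perm hinf
    set G : Set (Gel n) := SA ∩ {s | s.1 = β} with hGdef
    set E : Set (Gel n) := {s | s ∈ G ∧ gmul (gd β i₀) s ∉ SA} with hEdef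
    have hEfin : E.Finite :=
      (hlam (gd β i₀)).subset (by rintro s ⟨⟨h1, _⟩, h2⟩; exact ⟨h1, h2⟩)
    -- descent along the `u`-coordinate `i₀`
    have descent : ∀ k : ℕ, ∀ u v : Fin n → ℕ+, (β, u, v) ∈ G → (u i₀ : ℕ) = k + 1 →
        (∀ e ∈ E, ¬ (Function.update e.2.1 i₀ 1 = Function.update u i₀ 1 ∧ e.2.2 = v)) →
        (β, Function.update u i₀ 1, v) ∈ SA := by
      intro k
      induction k with
      | zero =>
        intro u v hG1 hu1 _
        have h1 : u i₀ = 1 := by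
          apply PNat.coe_injective; simpa using hu1
        have hupd : Function.update u i₀ 1 = u := by
          rw [← h1]; exact Function.update_eq_self i₀ u
        rw [hupd]; exact hG1.1
      | succ k ih =>
        intro u v hG1 hu1 havoid
        set m : ℕ+ := ⟨k + 1, Nat.succ_pos k⟩ with hm
        have hmc : (m : ℕ) = k + 1 := rfl
        have hmsucc : u i₀ = m + 1 := by
          apply PNat.coe_injective; push_cast; omega
        have hnotE : (β, u, v) ∉ E := fun hE => havoid _ hE ⟨rfl, rfl⟩
        have hstep : gmul (gd β i₀) (β, u, v) ∈ SA := by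
          by_contra hc
          exact hnotE ⟨hG1, hc⟩
        rw [delta_succ β i₀ u v m hmsucc] at hstep
        have hG2 : (β, Function.update u i₀ m, v) ∈ G := ⟨hstep, rfl⟩
        have hcoe : ((Function.update u i₀ m) i₀ : ℕ) = k + 1 := by
          rw [Function.update_self]; exact hmc
        have havoid2 : ∀ e ∈ E, ¬ (Function.update e.2.1 i₀ 1 =
            Function.update (Function.update u i₀ m) i₀ 1 ∧ e.2.2 = v) := by
          intro e he hcon
          rw [Function.update_idem] at hcon
          exact havoid e he hcon
        have := ih (Function.update u i₀ m) v hG2 hcoe havoid2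
        rwa [Function.update_idem] at this
    -- upward iteration along the `v`-coordinate `i₀`
    have upward : ∀ u v : Fin n → ℕ+, (β, u, v) ∈ G → u i₀ = 1 →
        (∀ e ∈ E, ¬ (Function.update e.2.1 i₀ 1 = Function.update u i₀ 1 ∧
            Function.update e.2.2 i₀ 1 = Function.update v i₀ 1)) →
        ∀ t : ℕ, (β, u, Function.update v i₀ (v i₀ + ⟨t + 1, Nat.succ_pos t⟩)) ∈ SA := by
      intro u v hG1 hu1 havoid t
      induction t with
      | zero =>
        have hnotE : (β, u, v) ∉ E := fun hE => havoid _ hE ⟨rfl, rfl⟩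
        have hstep : gmul (gd β i₀) (β, u, v) ∈ SA := by
          by_contra hc
          exact hnotE ⟨hG1, hc⟩
        rw [delta_base β i₀ u v hu1] at hstep
        exact hstep
      | succ t ih =>
        set A : ℕ+ := v i₀ + ⟨t + 1, Nat.succ_pos t⟩ with hA
        have hGc : (β, u, Function.update v i₀ A) ∈ G := ⟨ih, rfl⟩
        have hnotE : (β, u, Function.update v i₀ A) ∉ E := by
          intro hE
          refine havoid _ hE ⟨rfl, ?_⟩
          show Function.update (Function.update v i₀ A) i₀ 1 = _
          rw [Function.update_idem]
        have hstep : gmul (gd β i₀) (β, u, Function.update v i₀ A) ∈ SA := by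
          by_contra hc
          exact hnotE ⟨hGc, hc⟩
        rw [delta_base β i₀ u _ hu1] at hstep
        rw [Function.update_idem, Function.update_self] at hstep
        have harith : A + 1 = v i₀ + ⟨t + 1 + 1, Nat.succ_pos (t + 1)⟩ := by
          apply PNat.coe_injective
          simp only [hA, PNat.add_coe, PNat.mk_coe, PNat.one_coe]
          erw [PNat.add_coe, PNat.add_coe]
          simp only [PNat.mk_coe]
          omega
        rwa [harith] at hstep
    -- main case distinction
    by_cases hgood : ∃ s ∈ G, ∀ e ∈ E,
        ¬ (Function.update e.2.1 i₀ 1 = Function.update s.2.1 i₀ 1 ∧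
           Function.update e.2.2 i₀ 1 = Function.update s.2.2 i₀ 1)
    · obtain ⟨s, hsG, hsavoid⟩ := hgood
      obtain ⟨s1, us, vs⟩ := s
      have hs1 : β = s1 := hsG.2.symm
      subst hs1
      have hrowavoid : ∀ e ∈ E, ¬ (Function.update e.2.1 i₀ 1 =
          Function.update us i₀ 1 ∧ e.2.2 = vs) := by
        intro e he hcon
        exact hsavoid e he ⟨hcon.1, by rw [hcon.2]⟩
      obtain ⟨k, hk⟩ : ∃ k : ℕ, (us i₀ : ℕ) = k + 1 :=
        ⟨(us i₀ : ℕ) - 1, by have := (us i₀).pos; omega⟩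
      have hb : (β, Function.update us i₀ 1, vs) ∈ SA := descent k us vs hsG hk hrowavoid
      have hbG : (β, Function.update us i₀ 1, vs) ∈ G := ⟨hb, rfl⟩
      have hbavoid : ∀ e ∈ E, ¬ (Function.update e.2.1 i₀ 1 =
          Function.update (Function.update us i₀ 1) i₀ 1 ∧
          Function.update e.2.2 i₀ 1 = Function.update vs i₀ 1) := by
        intro e he hcon
        rw [Function.update_idem] at hcon
        exact hsavoid e he hcon
      have hfam := upward (Function.update us i₀ 1) vs hbG (Function.update_self _ _ _) hbavoid
      have hinj : Function.Injective (fun t : ℕ =>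
          ((β, Function.update us i₀ 1,
            Function.update vs i₀ (vs i₀ + ⟨t + 1, Nat.succ_pos t⟩)) : Gel n)) := by
        intro t t' h
        have h3 := congrArg (fun s : Gel n => ((s.2.2 i₀ : ℕ+) : ℕ)) h
        simp only [Function.update_self, PNat.add_coe, PNat.mk_coe] at h3
        erw [PNat.add_coe, PNat.add_coe] at h3
        simp only [PNat.mk_coe] at h3
        omega
      have hi : {s | s ∈ SA ∧ s.2.1 = Function.update us i₀ 1}.Infinite :=
        Set.infinite_of_injective_forall_mem hinj (fun t => ⟨hfam t, rfl⟩)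
      exact absurd hi (Set.not_infinite.mpr (hufib _))
    · push_neg at hgood
      haveI := hEfin.to_subtype
      have hcov : G ⊆ ⋃ e : ↥E, {s : Gel n |
          Function.update (e : Gel n).2.1 i₀ 1 = Function.update s.2.1 i₀ 1 ∧
          Function.update (e : Gel n).2.2 i₀ 1 = Function.update s.2.2 i₀ 1} := by
        intro s hs
        obtain ⟨e, he, hcond⟩ := hgood s hs
        exact Set.mem_iUnion.2 ⟨⟨e, he⟩, hcond⟩
      obtain ⟨e₀, hC⟩ := pigeon hG (fun e : ↥E => {s : Gel n |
          Function.update (e : Gel n).2.1 i₀ 1 = Function.update s.2.1 i₀ 1 ∧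
          Function.update (e : Gel n).2.2 i₀ 1 = Function.update s.2.2 i₀ 1}) hcov
      set udag : Fin n → ℕ+ := Function.update (e₀ : Gel n).2.1 i₀ 1 with hudag
      set wdag : Fin n → ℕ+ := Function.update (e₀ : Gel n).2.2 i₀ 1 with hwdag
      set Cinf : Set (Gel n) := G ∩ {s : Gel n |
          Function.update (e₀ : Gel n).2.1 i₀ 1 = Function.update s.2.1 i₀ 1 ∧
          Function.update (e₀ : Gel n).2.2 i₀ 1 = Function.update s.2.2 i₀ 1} with hCdef
      set Vinf : Set ℕ+ := (fun s : Gel n => s.2.2 i₀) '' Cinf with hVdef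
      by_cases hV : Vinf.Finite
      · haveI := hV.to_subtype
        have hcovv : (G ∩ {s : Gel n |
            Function.update (e₀ : Gel n).2.1 i₀ 1 = Function.update s.2.1 i₀ 1 ∧
            Function.update (e₀ : Gel n).2.2 i₀ 1 = Function.update s.2.2 i₀ 1}) ⊆
            ⋃ w : ↥Vinf, {s : Gel n | s.2.2 i₀ = ↑w} := by
          intro s hs
          exact Set.mem_iUnion.2 ⟨⟨s.2.2 i₀, ⟨s, hs, rfl⟩⟩, rfl⟩
        obtain ⟨wbar, hwbar⟩ := pigeon hC (fun w : ↥Vinf => {s : Gel n | s.2.2 i₀ = ↑w}) hcovv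
        have hVall : ∀ t : ℕ+, (↑wbar + t) ∈ Vinf := by
          intro t
          obtain ⟨s, hsmem, hsnot⟩ := ((hwbar.diff (hrho (hr i₀ t))).nonempty)
          have hsSA : s ∈ SA := hsmem.1.1.1
          have himgSA : gmul s (hr i₀ t) ∈ SA := by
            by_contra hc2
            exact hsnot ⟨hsSA, hc2⟩
          rw [rmap] at himgSA
          have hb1 : s.1 = β := hsmem.1.1.2
          have hbC : (s.1, s.2.1, Function.update s.2.2 i₀ (s.2.2 i₀ + t)) ∈ Cinf := by
            refine ⟨⟨himgSA, hb1⟩, hsmem.1.2.1, ?_⟩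
            show Function.update (e₀ : Gel n).2.2 i₀ 1 =
              Function.update (Function.update s.2.2 i₀ (s.2.2 i₀ + t)) i₀ 1
            rw [Function.update_idem]
            exact hsmem.1.2.2
          refine ⟨_, hbC, ?_⟩
          show (Function.update s.2.2 i₀ (s.2.2 i₀ + t)) i₀ = ↑wbar + t
          rw [Function.update_self, hsmem.2]
        have hVinf : Vinf.Infinite :=
          Set.infinite_of_injective_forall_mem
            (f := fun t : ℕ+ => (↑wbar : ℕ+) + t)
            (fun t t' h => by exact add_right_injective _ h) hVall
        exact absurd hVinf (Set.not_infinite.mpr hV)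
      · replace hV : Vinf.Infinite := hV
        set Bad : Set ℕ+ := (fun e : Gel n => e.2.2 i₀) '' E with hBadDef
        have hBad : Bad.Finite := hEfin.image _
        have hVB : (Vinf \ Bad).Infinite := hV.diff hBad
        have hmem : ∀ v ∈ Vinf \ Bad, (β, udag, Function.update wdag i₀ v) ∈ SA := by
          rintro v ⟨hvV, hvB⟩
          obtain ⟨s, hsC, hsv⟩ := hvV
          obtain ⟨⟨hsSA, hsb⟩, hcond1, hcond2⟩ := hsC
          obtain ⟨s1, us, vs⟩ := s
          obtain rfl : s1 = β := hsb
          have hsv' : vs i₀ = v := hsv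
          have hrow : ∀ e ∈ E, ¬ (Function.update e.2.1 i₀ 1 =
              Function.update us i₀ 1 ∧ e.2.2 = vs) := by
            rintro e he ⟨_, h2⟩
            refine hvB ⟨e, he, ?_⟩
            show e.2.2 i₀ = v
            rw [h2]; exact hsv'
          obtain ⟨k, hk⟩ : ∃ k : ℕ, (us i₀ : ℕ) = k + 1 :=
            ⟨(us i₀ : ℕ) - 1, by have := (us i₀).pos; omega⟩
          have hres := descent k us vs ⟨hsSA, rfl⟩ hk hrow
          have he1 : Function.update us i₀ 1 = udag := hcond1.symm
          have he2 : vs = Function.update wdag i₀ v := by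
            funext j
            rcases eq_or_ne j i₀ with rfl | hne
            · rw [Function.update_self]; exact hsv'
            · rw [Function.update_of_ne hne, hwdag, Function.update_of_ne hne]
              have h6 := congrFun hcond2 j
              rw [Function.update_of_ne hne, Function.update_of_ne hne] at h6
              exact h6.symm
          rwa [he1, he2] at hres
        have hinj2 : Set.InjOn (fun v : ℕ+ =>
            ((β, udag, Function.update wdag i₀ v) : Gel n)) (Vinf \ Bad) := by
          intro v _ v' _ h
          have h3 := congrArg (fun s : Gel n => s.2.2 i₀) h
          simpa only [Function.update_self] using h3
        have hi : {s | s ∈ SA ∧ s.2.1 = udag}.Infinite := by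
          refine Set.Infinite.mono ?_ (hVB.image hinj2)
          rintro x ⟨v, hv, rfl⟩
          exact ⟨hmem v hv, rfl⟩
        exact absurd hi (Set.not_infinite.mpr (hufib udag))

lemma lineKey {n : ℕ} (i₀ : Fin n) (SA : Set (Gel n)) (hinf : SA.Infinite)
    (hlam : ∀ g : Gel n, {s : Gel n | s ∈ SA ∧ gmul g s ∉ SA}.Finite)
    (hrho : ∀ h : Gel n, {s : Gel n | s ∈ SA ∧ gmul s h ∉ SA}.Finite)
    (σ : Equiv.Perm (Fin n)) (a : Fin n → ℕ+) :
    {y : Fin n → ℕ+ | (σ, a, y) ∈ SA}.Infinite := by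
  obtain ⟨β₀, u₀, hv⟩ := core i₀ SA hinf hlam hrho
  have hbadfin : {v : Fin n → ℕ+ | (β₀, u₀, v) ∈ SA ∧
      gmul (gline β₀ u₀ σ a) (β₀, u₀, v) ∉ SA}.Finite := by
    have he : {v : Fin n → ℕ+ | (β₀, u₀, v) ∈ SA ∧
        gmul (gline β₀ u₀ σ a) (β₀, u₀, v) ∉ SA} =
        (fun v : Fin n → ℕ+ => ((β₀, u₀, v) : Gel n)) ⁻¹'
          {s : Gel n | s ∈ SA ∧ gmul (gline β₀ u₀ σ a) s ∉ SA} := rfl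
    rw [he]
    refine Set.Finite.preimage ?_ (hlam (gline β₀ u₀ σ a))
    intro v _ v' _ h
    exact congrArg (fun s : Gel n => s.2.2) h
  refine ((hv.diff hbadfin).mono ?_)
  rintro v ⟨hvSA, hvbad⟩
  have himg : gmul (gline β₀ u₀ σ a) (β₀, u₀, v) ∈ SA := by
    by_contra hc
    exact hvbad ⟨hvSA, hc⟩
  rwa [gline_mul] at himg

def addN {n : ℕ} (y : Fin n → ℕ+) (d : Fin n → ℕ) : Fin n → ℕ+ :=
  fun i => ⟨(y i : ℕ) + d i, by have := (y i).pos; omega⟩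

lemma addN_coe {n : ℕ} (y : Fin n → ℕ+) (d : Fin n → ℕ) (i : Fin n) :
    ((addN y d i : ℕ+) : ℕ) = (y i : ℕ) + d i := rfl

lemma cone {n : ℕ} (SA : Set (Gel n))
    (hrho : ∀ h : Gel n, {s : Gel n | s ∈ SA ∧ gmul s h ∉ SA}.Finite)
    (σ : Equiv.Perm (Fin n)) (a : Fin n → ℕ+)
    (hKEY : {y : Fin n → ℕ+ | (σ, a, y) ∈ SA}.Infinite) :
    ∃ ystar : Fin n → ℕ+, ∀ x : Fin n → ℕ+, (σ, a, fun i => x i + ystar i) ∈ SA := by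
  classical
  set E' : Set (Gel n) := ⋃ j : Fin n, {s : Gel n | s ∈ SA ∧ gmul s (hr j 1) ∉ SA} with hE'
  have hE'fin : E'.Finite := Set.finite_iUnion (fun j => hrho (hr j 1))
  set R : ℕ := hE'fin.toFinset.sup (fun e => ∑ i, (e.2.2 i : ℕ)) with hRdef
  have hR : ∀ e ∈ E', (∑ i, (e.2.2 i : ℕ)) ≤ R :=
    fun e he => Finset.le_sup (f := fun e : Gel n => ∑ i, (e.2.2 i : ℕ))
      (hE'fin.mem_toFinset.2 he)
  have hlow : {y : Fin n → ℕ+ | ∑ i, (y i : ℕ) ≤ R}.Finite := by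
    refine (finite_bdd R).subset ?_
    intro y hy i
    exact le_trans (Finset.single_le_sum (f := fun i : Fin n => (y i : ℕ))
      (fun _ _ => Nat.zero_le _) (Finset.mem_univ i)) hy
  obtain ⟨ystar, hyKEY, hyR⟩ := (hKEY.diff hlow).nonempty
  have hyR' : R < ∑ i, (ystar i : ℕ) := by
    by_contra hc
    exact hyR (by simpa using Nat.le_of_not_lt hc)
  refine ⟨ystar, ?_⟩
  have main : ∀ N : ℕ, ∀ d : Fin n → ℕ, (∑ i, d i) = N → (σ, a, addN ystar d) ∈ SA := by
    intro N
    induction N using Nat.strong_induction_on with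
    | _ N ih =>
      intro d hd
      rcases Nat.eq_zero_or_pos N with rfl | hNpos
      · have hzero : ∀ i ∈ Finset.univ, d i = 0 := Finset.sum_eq_zero_iff.1 hd
        have haz : addN ystar d = ystar := by
          funext i
          apply PNat.coe_injective
          rw [addN_coe, hzero i (Finset.mem_univ i)]
          omega
        rw [haz]
        exact hyKEY
      · have hex : ∃ j, d j ≠ 0 := by
          by_contra hno
          push_neg at hno
          rw [Finset.sum_eq_zero (fun i _ => hno i)] at hd
          omega
        obtain ⟨j, hj⟩ := hex
        set d' : Fin n → ℕ := Function.update d j (d j - 1) with hd'def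
        have hsum' : (∑ i, d' i) = N - 1 := by
          rw [hd'def, Finset.sum_update_of_mem (Finset.mem_univ j)]
          have hsplit : d j + ∑ i ∈ Finset.univ.erase j, d i = ∑ i, d i :=
            Finset.add_sum_erase Finset.univ d (Finset.mem_univ j)
          rw [Finset.sdiff_singleton_eq_erase]
          omega
        have hw := ih (N - 1) (by omega) d' hsum'
        have hbig : R < ∑ i, (((σ, a, addN ystar d') : Gel n).2.2 i : ℕ) := by
          refine lt_of_lt_of_le hyR' ?_
          refine Finset.sum_le_sum ?_
          intro i _
          rw [show (((σ, a, addN ystar d') : Gel n).2.2 i : ℕ) = (ystar i : ℕ) + d' i from rfl]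
          omega
        have hnotE : (σ, a, addN ystar d') ∉ E' := fun hmem => absurd (hR _ hmem) (not_le.2 hbig)
        have hstep : gmul (σ, a, addN ystar d') (hr j 1) ∈ SA := by
          by_contra hc
          exact hnotE (Set.mem_iUnion.2 ⟨j, hw, hc⟩)
        rw [rmap] at hstep
        have hupd : Function.update (((σ, a, addN ystar d') : Gel n)).2.2 j
            ((((σ, a, addN ystar d') : Gel n)).2.2 j + 1) = addN ystar d := by
          funext i
          rcases eq_or_ne i j with rfl | hne
          · rw [Function.update_self]
            apply PNat.coe_injective
            rw [show ((addN ystar d' i + 1 : ℕ+) : ℕ) = ((ystar i : ℕ) + d' i) + 1 from rfl,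
              addN_coe, hd'def, Function.update_self]
            omega
          · rw [Function.update_of_ne hne]
            apply PNat.coe_injective
            rw [addN_coe, addN_coe, hd'def, Function.update_of_ne hne]
        rw [show (((σ, a, addN ystar d') : Gel n)).1 = σ from rfl,
          show (((σ, a, addN ystar d') : Gel n)).2.1 = a from rfl, hupd] at hstep
        exact hstep
  intro x
  have hfin := main (∑ i, (x i : ℕ)) (fun i => (x i : ℕ)) rfl
  have he : addN ystar (fun i => (x i : ℕ)) = fun i => x i + ystar i := by
    funext i
    apply PNat.coe_injective
    rw [addN_coe]
    push_cast
    omega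
  rwa [he] at hfin

end GelAux


/-- Lemma 1.6: in a Hausdorff locally compact non-discrete semitopological
topology on `S⁰`, for every open neighbourhood `U` of the zero, every
permutation `σ` and every `a ∈ ℕⁿ`, the set `L_σ^a \ U` is finite. -/
theorem L_diff_U_finite {n : ℕ} [TopologicalSpace (Option (Gel n))]
    [T2Space (Option (Gel n))] [LocallyCompactSpace (Option (Gel n))]
    (hsep : ∀ a : Option (Gel n),
      Continuous (fun x => gmul0 a x) ∧ Continuous (fun x => gmul0 x a))
    (hnd : ¬ DiscreteTopology (Option (Gel n)))
    (U : Set (Option (Gel n))) (hU : IsOpen U) (h0 : none ∈ U)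
    (σ : Equiv.Perm (Fin n)) (a : Fin n → ℕ+) :
    {x : Fin n → ℕ+ | some (σ, a, x) ∉ U}.Finite := by

  classical
  rcases Nat.eq_zero_or_pos n with hn | hn
  · subst hn
    exact absurd (inferInstance : DiscreteTopology (Option (Gel 0))) hnd
  · have i₀ : Fin n := ⟨0, hn⟩
    obtain ⟨K, hKnhds, hKU, hKcomp⟩ :=
      LocallyCompactSpace.local_compact_nhds (none : Option (Gel n)) U (hU.mem_nhds h0)
    have hint : none ∈ interior K := mem_interior_iff_mem_nhds.2 hKnhds
    set SA : Set (Gel n) := {s : Gel n | some s ∈ K} with hSAdef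
    have hSAP : ∀ W : Set (Option (Gel n)), IsOpen W → none ∈ W →
        {s : Gel n | s ∈ SA ∧ some s ∉ W}.Finite := by
      intro W hW h0W
      have hfin := GelAux.compact_diff_finite hsep hKcomp hW h0W
      have he : {s : Gel n | s ∈ SA ∧ some s ∉ W} =
          (fun s : Gel n => some s) ⁻¹' (K \ W) := rfl
      rw [he]
      exact Set.Finite.preimage (Set.injOn_of_injective (Option.some_injective _)) hfin
    have hSAinf : SA.Infinite := by
      have hinf2 : (interior K).Infinite :=
        GelAux.nhd_zero_infinite hsep hnd isOpen_interior hint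
      have h3 : (interior K \ {none}).Infinite := hinf2.diff (Set.finite_singleton _)
      have h4 : ((fun s : Gel n => some s) ⁻¹' (interior K \ {none})).Infinite := by
        refine h3.preimage ?_
        rintro x ⟨hx, hxn⟩
        match x with
        | none => exact absurd rfl hxn
        | some s => exact ⟨s, rfl⟩
      refine h4.mono ?_
      intro s hs
      show some s ∈ K
      exact interior_subset hs.1
    have hlam : ∀ g : Gel n, {s : Gel n | s ∈ SA ∧ gmul g s ∉ SA}.Finite := by
      intro g
      have hWopen : IsOpen ((fun x => gmul0 (some g) x) ⁻¹' interior K) :=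
        (hsep (some g)).1.isOpen_preimage _ isOpen_interior
      have h0W : (none : Option (Gel n)) ∈ (fun x => gmul0 (some g) x) ⁻¹' interior K := by
        show gmul0 (some g) none ∈ interior K
        rw [GelAux.gmul0_none_right]
        exact hint
      refine (hSAP _ hWopen h0W).subset ?_
      rintro s ⟨hs, hgs⟩
      refine ⟨hs, fun hmem => hgs ?_⟩
      have hmm : gmul0 (some g) (some s) ∈ interior K := hmem
      rw [GelAux.gmul0_some] at hmm
      show some (gmul g s) ∈ K
      exact interior_subset hmm
    have hrho : ∀ h : Gel n, {s : Gel n | s ∈ SA ∧ gmul s h ∉ SA}.Finite := by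
      intro h
      have hWopen : IsOpen ((fun x => gmul0 x (some h)) ⁻¹' interior K) :=
        (hsep (some h)).2.isOpen_preimage _ isOpen_interior
      have h0W : (none : Option (Gel n)) ∈ (fun x => gmul0 x (some h)) ⁻¹' interior K := by
        show gmul0 none (some h) ∈ interior K
        exact hint
      refine (hSAP _ hWopen h0W).subset ?_
      rintro s ⟨hs, hgs⟩
      refine ⟨hs, fun hmem => hgs ?_⟩
      have hmm : gmul0 (some s) (some h) ∈ interior K := hmem
      rw [GelAux.gmul0_some] at hmm
      show some (gmul s h) ∈ K
      exact interior_subset hmm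
    have hKEY := GelAux.lineKey i₀ SA hSAinf hlam hrho σ a
    obtain ⟨ystar, hcone⟩ := GelAux.cone SA hrho σ a hKEY
    have hWD : IsOpen ((fun x => gmul0 x (some (GelAux.hD ystar))) ⁻¹' U) :=
      (hsep (some (GelAux.hD ystar))).2.isOpen_preimage _ hU
    have h0WD : (none : Option (Gel n)) ∈ (fun x => gmul0 x (some (GelAux.hD ystar))) ⁻¹' U := by
      show gmul0 none (some (GelAux.hD ystar)) ∈ U
      exact h0
    have hbad := hSAP _ hWD h0WD
    have hsub : {x : Fin n → ℕ+ | some (σ, a, x) ∉ U} ⊆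
        (fun x : Fin n → ℕ+ => ((σ, a, fun i => x i + ystar i) : Gel n)) ⁻¹'
          {s : Gel n | s ∈ SA ∧ some s ∉ (fun x => gmul0 x (some (GelAux.hD ystar))) ⁻¹' U} := by
      intro x hx
      refine ⟨hcone x, fun hmem => hx ?_⟩
      have : gmul0 (some ((σ, a, fun i => x i + ystar i) : Gel n))
          (some (GelAux.hD ystar)) ∈ U := hmem
      rw [GelAux.gmul0_some, GelAux.hD_mul] at this
      exact this
    refine Set.Finite.subset (Set.Finite.preimage ?_ hbad) hsub
    intro x _ x' _ h
    have h3 := congrArg (fun s : Gel n => s.2.2) h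
    funext i
    have h4 := congrFun h3 i
    have h5 : x i + ystar i = x' i + ystar i := h4
    exact add_right_cancel h5
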